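/- Let M, L > 0, E ∈ (-M²/(2L), 0), and let r₋(E) < r₊(E) be the two roots of Ψ⁰(r) = E where Ψ⁰(r) = -M/r + L/(2r²). Then for all r ∈ [r₋(E), r₊(E)], the concavity estimate E - Ψ⁰(r) ≥ L·(r₊(E) - r)·(r - r₋(E)) / (2r²·r₋(E)·r₊(E)) holds. -/
import Mathlib


theorem stmt_10 (M L E : ℝ) (hM : 0 < M) (hL : 0 < L)
    (hE₁ : -M ^ 2 / (2 * L) < E) (hE₂ : E < 0)
    (Ψ : ℝ → ℝ) (hΨ : ∀ r, Ψ r = -M / r + L / (2 * r ^ 2))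
    (rm rp : ℝ) (hrm₀ : 0 < rm) (hrmrp : rm < rp)
    (hroot₁ : Ψ rm = E) (hroot₂ : Ψ rp = E) :
    ∀ r ∈ Set.Icc rm rp,
      L * (rp - r) * (r - rm) / (2 * r ^ 2 * rm * rp) ≤ E - Ψ r := by
  have hrp₀ : 0 < rp := hrm₀.trans hrmrp
  have hrm' : rm ≠ 0 := hrm₀.ne'
  have hrp' : rp ≠ 0 := hrp₀.ne'
  have h1 : 2*E*rm^2 + 2*M*rm - L = 0 := by
    have := hroot₁; rw [hΨ rm] at this
    field_simp at this; nlinarith [this]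
  have h2 : 2*E*rp^2 + 2*M*rp - L = 0 := by
    have := hroot₂; rw [hΨ rp] at this
    field_simp at this; nlinarith [this]
  have h3 : E*(rm+rp) = -M := by
    have hne : rm - rp ≠ 0 := by intro h; nlinarith
    have : (rm - rp) * (2*(E*(rm+rp)+M)) = 0 := by nlinarith
    rcases mul_eq_zero.mp this with h | h
    · exact absurd h hne
    · linarith
  have hLval : L = -2*E*rm*rp := by nlinarith
  intro r hr
  obtain ⟨hr1, hr2⟩ := hr
  have hr₀ : 0 < r := hrm₀.trans_le hr1
  have hr' : r ≠ 0 := hr₀.ne'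
  have : L * (rp - r) * (r - rm) / (2 * r ^ 2 * rm * rp) = E - Ψ r := by
    rw [hΨ r, hLval]
    have hM' : M = -(E*(rm+rp)) := by linarith
    rw [hM']
    field_simp
    ring
  linarith [this.le]
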